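/- In a finite directed graph G, a nonempty set X of vertices is a Schwartz component (i.e., a minimal nonempty set such that no arc of G goes from a vertex outside X to a vertex inside X) if and only if X is a strongly connected component of G into which no arc enters from outside X. -/
import Mathlib


/-!
Schwartz components of a finite directed graph are exactly the strongly
connected components with no incoming arcs from outside.
-/

variable {ι : Type*} [Fintype ι] [DecidableEq ι]

/-- `X` is a Schwartz component of the directed graph with arc relation `E`:
a minimal nonempty set of vertices such that no arc of the graph goes from a
vertex outside `X` to a vertex inside `X`. -/
def SchwartzComponent (E : ι → ι → Prop) (X : Finset ι) : Prop :=
  X.Nonempty ∧ (∀ b, b ∉ X → ∀ a ∈ X, ¬ E b a) ∧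
  ∀ Y, Y ⊆ X → Y.Nonempty → (∀ b, b ∉ Y → ∀ a ∈ Y, ¬ E b a) → Y = X

/-- `X` is a strongly connected component of the directed graph with arc
relation `E`: a maximal set of vertices such that every vertex of the set is
reachable from every other vertex of the set by a directed path. -/
def IsSCC (E : ι → ι → Prop) (X : Finset ι) : Prop :=
  (∀ a ∈ X, ∀ b ∈ X, Relation.ReflTransGen E a b) ∧
  ∀ Y : Finset ι, X ⊆ Y → (∀ a ∈ Y, ∀ b ∈ Y, Relation.ReflTransGen E a b) → Y = X

/-- Anything that reaches a predecessor-closed set lies in it. -/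
lemma mem_of_reach_closed {E : ι → ι → Prop} {X : Finset ι}
    (hcl : ∀ b, b ∉ X → ∀ a ∈ X, ¬ E b a) {x a : ι}
    (h : Relation.ReflTransGen E x a) (ha : a ∈ X) : x ∈ X := by
  induction h using Relation.ReflTransGen.head_induction_on with
  | refl => exact ha
  | head hE _ ih =>
    by_contra hx
    exact hcl _ hx _ ih hE

/-- a nonempty set `X` of vertices of a finite directed graph is
a Schwartz component iff it is a strongly connected component into which no
arc enters from outside. -/
theorem schwartzComponent_iff_scc_no_incoming (E : ι → ι → Prop)
    (X : Finset ι) (hX : X.Nonempty) :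
    SchwartzComponent E X ↔
    (IsSCC E X ∧ ∀ b, b ∉ X → ∀ a ∈ X, ¬ E b a) := by
  classical
  constructor
  · rintro ⟨-, hcl, hmin⟩
    have hconn : ∀ a ∈ X, ∀ b ∈ X, Relation.ReflTransGen E a b := by
      intro a ha b hb
      set Y : Finset ι := X.filter (fun x => Relation.ReflTransGen E x b) with hY
      have hYX : Y ⊆ X := Finset.filter_subset _ _
      have hbY : b ∈ Y := Finset.mem_filter.2 ⟨hb, Relation.ReflTransGen.refl⟩
      have hYcl : ∀ c, c ∉ Y → ∀ d ∈ Y, ¬ E c d := by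
        intro c hc d hd hE
        have hd' := Finset.mem_filter.1 hd
        have hcX : c ∈ X := by
          by_contra hcX
          exact hcl _ hcX _ (hYX hd) hE
        exact hc (Finset.mem_filter.2 ⟨hcX, Relation.ReflTransGen.head hE hd'.2⟩)
      have := hmin Y hYX ⟨b, hbY⟩ hYcl
      have haY : a ∈ Y := this ▸ ha
      exact (Finset.mem_filter.1 haY).2
    refine ⟨⟨hconn, ?_⟩, hcl⟩
    intro Y hXY hYconn
    obtain ⟨a, ha⟩ := hX
    apply Finset.Subset.antisymm _ hXY
    intro y hy
    exact mem_of_reach_closed hcl (hYconn y hy a (hXY ha)) ha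
  · rintro ⟨⟨hconn, -⟩, hcl⟩
    refine ⟨hX, hcl, ?_⟩
    intro Y hYX ⟨y, hy⟩ hYcl
    apply Finset.Subset.antisymm hYX
    intro x hx
    exact mem_of_reach_closed hYcl (hconn x hx y (hYX hy)) hy
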